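/- Let a ≠ 0, M ≠ 0 and V = (ρ, u, e, π, û, ψ) ∈ ℝ⁶ with ρ ≠ 0. Then the six vectors r¹ᵘ, r²ᵘ, r³ᵘ, r⁴ᵘ, r⁺, r⁻ form a basis of ℝ⁶; consequently A(V) admits a basis of real eigenvectors, i.e. the explicit subsystem is hyperbolic. -/
import Mathlib

private lemma vec6_at0 {α : Type*} (a b c d e f : α) : ![a,b,c,d,e,f] 0 = a := rfl
private lemma vec6_at1 {α : Type*} (a b c d e f : α) : ![a,b,c,d,e,f] 1 = b := rfl
private lemma vec6_at2 {α : Type*} (a b c d e f : α) : ![a,b,c,d,e,f] 2 = c := rfl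
private lemma vec6_at3 {α : Type*} (a b c d e f : α) : ![a,b,c,d,e,f] 3 = d := rfl
private lemma vec6_at4 {α : Type*} (a b c d e f : α) : ![a,b,c,d,e,f] 4 = e := rfl
private lemma vec6_at5 {α : Type*} (a b c d e f : α) : ![a,b,c,d,e,f] 5 = f := rfl

private lemma c6_1 {α : Type*} (x : α) (u : Fin 5 → α) : Matrix.vecCons x u 1 = u 0 := rfl
private lemma c6_2 {α : Type*} (x : α) (u : Fin 5 → α) : Matrix.vecCons x u 2 = u 1 := rfl
private lemma c6_3 {α : Type*} (x : α) (u : Fin 5 → α) : Matrix.vecCons x u 3 = u 2 := rfl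
private lemma c6_4 {α : Type*} (x : α) (u : Fin 5 → α) : Matrix.vecCons x u 4 = u 3 := rfl
private lemma c6_5 {α : Type*} (x : α) (u : Fin 5 → α) : Matrix.vecCons x u 5 = u 4 := rfl
private lemma c5_1 {α : Type*} (x : α) (u : Fin 4 → α) : Matrix.vecCons x u 1 = u 0 := rfl
private lemma c5_2 {α : Type*} (x : α) (u : Fin 4 → α) : Matrix.vecCons x u 2 = u 1 := rfl
private lemma c5_3 {α : Type*} (x : α) (u : Fin 4 → α) : Matrix.vecCons x u 3 = u 2 := rfl
private lemma c5_4 {α : Type*} (x : α) (u : Fin 4 → α) : Matrix.vecCons x u 4 = u 3 := rfl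
private lemma c4_1 {α : Type*} (x : α) (u : Fin 3 → α) : Matrix.vecCons x u 1 = u 0 := rfl
private lemma c4_2 {α : Type*} (x : α) (u : Fin 3 → α) : Matrix.vecCons x u 2 = u 1 := rfl
private lemma c4_3 {α : Type*} (x : α) (u : Fin 3 → α) : Matrix.vecCons x u 3 = u 2 := rfl
private lemma c3_1 {α : Type*} (x : α) (u : Fin 2 → α) : Matrix.vecCons x u 1 = u 0 := rfl
private lemma c3_2 {α : Type*} (x : α) (u : Fin 2 → α) : Matrix.vecCons x u 2 = u 1 := rfl
private lemma c2_1 {α : Type*} (x : α) (u : Fin 1 → α) : Matrix.vecCons x u 1 = u 0 := rfl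

set_option maxHeartbeats 1000000 in
/-- The six vectors `r¹ᵘ, r²ᵘ, r³ᵘ, r⁴ᵘ, r⁺, r⁻` form a basis of `ℝ⁶`
(they are linearly independent and span); consequently the matrix `A(V)` of the
explicit Suliciu-type relaxation subsystem admits a basis of real eigenvectors,
i.e. the explicit subsystem is hyperbolic. -/
theorem explicit_subsystem_hyperbolic (a M ρ u e piv uh ψ : ℝ)
    (ha : a ≠ 0) (hM : M ≠ 0) (hρ : ρ ≠ 0) :
    let A : Matrix (Fin 6) (Fin 6) ℝ :=
      !![u, ρ, 0, 0, 0, 0;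
         0, u, 0, 1/ρ, 0, (1 - M^2)/(M^2*ρ);
         0, (M^2*piv + (1 - M^2)*ψ)/ρ, u, 0, 0, 0;
         0, a^2/ρ, 0, u, 0, 0;
         0, 0, 0, 0, u, 0;
         0, 0, 0, 0, 0, u]
    let rs : Fin 6 → (Fin 6 → ℝ) :=
      ![![0, 0, 0, 1 - 1/M^2, 0, 1],
        ![0, 0, 0, 0, 1, 0],
        ![0, 0, 1, 0, 0, 0],
        ![1, 0, 0, 0, 0, 0],
        ![ρ^2/a^2, 1/a, (M^2*piv + (1 - M^2)*ψ)/a^2, 1, 0, 0],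
        ![ρ^2/a^2, -(1/a), (M^2*piv + (1 - M^2)*ψ)/a^2, 1, 0, 0]]
    LinearIndependent ℝ rs ∧ Submodule.span ℝ (Set.range rs) = ⊤ ∧
      ∀ i : Fin 6, ∃ lam : ℝ, A.mulVec (rs i) = lam • rs i := by
  intro A rs
  have hM2 : M^2 ≠ 0 := pow_ne_zero _ hM
  have ha2 : a^2 ≠ 0 := pow_ne_zero _ ha
  have hind : LinearIndependent ℝ rs := by
    rw [Fintype.linearIndependent_iff]
    intro g hg i
    simp only [Fin.sum_univ_six] at hg
    have h := fun j => congrFun hg j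
    have h0 : g 0 * (0:ℝ) + g 1 * 0 + g 2 * 0 + g 3 * 1 + g 4 * (ρ^2/a^2)
        + g 5 * (ρ^2/a^2) = 0 := h 0
    have h1 : g 0 * (0:ℝ) + g 1 * 0 + g 2 * 0 + g 3 * 0 + g 4 * (1/a)
        + g 5 * (-(1/a)) = 0 := h 1
    have h2 : g 0 * (0:ℝ) + g 1 * 0 + g 2 * 1 + g 3 * 0
        + g 4 * ((M^2*piv + (1 - M^2)*ψ)/a^2)
        + g 5 * ((M^2*piv + (1 - M^2)*ψ)/a^2) = 0 := h 2
    have h3 : g 0 * (1 - 1/M^2) + g 1 * 0 + g 2 * 0 + g 3 * 0 + g 4 * 1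
        + g 5 * 1 = 0 := h 3
    have h4 : g 0 * (0:ℝ) + g 1 * 1 + g 2 * 0 + g 3 * 0 + g 4 * 0 + g 5 * 0 = 0 := h 4
    have h5 : g 0 * (1:ℝ) + g 1 * 0 + g 2 * 0 + g 3 * 0 + g 4 * 0 + g 5 * 0 = 0 := h 5
    have hg0 : g 0 = 0 := by linarith
    have hg1 : g 1 = 0 := by linarith
    have hg45 : g 4 = g 5 := by
      field_simp at h1; linarith
    have hg4 : g 4 = 0 := by
      rw [hg0] at h3; rw [hg45] at h3 ⊢; linarith
    have hg5 : g 5 = 0 := by rw [← hg45]; exact hg4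
    have hg3 : g 3 = 0 := by rw [hg4, hg5] at h0; linarith
    have hg2 : g 2 = 0 := by rw [hg4, hg5] at h2; linarith
    fin_cases i <;> assumption
  refine ⟨hind, hind.span_eq_top_of_card_eq_finrank (by simp), ?_⟩
  intro i
  have hs4 : rs 4 = ![ρ^2/a^2, 1/a, (M^2*piv + (1 - M^2)*ψ)/a^2, 1, 0, 0] := rfl
  have hs5 : rs 5 = ![ρ^2/a^2, -(1/a), (M^2*piv + (1 - M^2)*ψ)/a^2, 1, 0, 0] := rfl
  fin_cases i
  · exact ⟨u, by
      funext j
      fin_cases j <;>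
        simp [A, rs, Matrix.mulVec, dotProduct, Fin.sum_univ_six, Matrix.of_apply,
          Matrix.cons_val_zero, c6_1, c6_2, c6_3, c6_4, c6_5, c5_1, c5_2, c5_3, c5_4, c4_1, c4_2, c4_3, c3_1, c3_2, c2_1] <;>
        ((try field_simp) <;> (try ring) <;> (try tauto))⟩
  · exact ⟨u, by
      funext j
      fin_cases j <;>
        simp [A, rs, Matrix.mulVec, dotProduct, Fin.sum_univ_six, Matrix.of_apply,
          Matrix.cons_val_zero, c6_1, c6_2, c6_3, c6_4, c6_5, c5_1, c5_2, c5_3, c5_4, c4_1, c4_2, c4_3, c3_1, c3_2, c2_1]⟩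
  · exact ⟨u, by
      funext j
      fin_cases j <;>
        simp [A, rs, Matrix.mulVec, dotProduct, Fin.sum_univ_six, Matrix.of_apply,
          Matrix.cons_val_zero, c6_1, c6_2, c6_3, c6_4, c6_5, c5_1, c5_2, c5_3, c5_4, c4_1, c4_2, c4_3, c3_1, c3_2, c2_1]⟩
  · exact ⟨u, by
      funext j
      fin_cases j <;>
        simp [A, rs, Matrix.mulVec, dotProduct, Fin.sum_univ_six, Matrix.of_apply,
          Matrix.cons_val_zero, c6_1, c6_2, c6_3, c6_4, c6_5, c5_1, c5_2, c5_3, c5_4, c4_1, c4_2, c4_3, c3_1, c3_2, c2_1]⟩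
  · exact ⟨u + a/ρ, by
      funext j
      fin_cases j <;>
        simp [A, rs, Matrix.mulVec, dotProduct, Fin.sum_univ_six, Matrix.of_apply,
          Matrix.cons_val_zero, c6_1, c6_2, c6_3, c6_4, c6_5, c5_1, c5_2, c5_3, c5_4, c4_1, c4_2, c4_3, c3_1, c3_2, c2_1] <;>
        ((try field_simp) <;> (try ring) <;> (try tauto))⟩
  · exact ⟨u - a/ρ, by
      funext j
      fin_cases j <;>
        simp [A, rs, Matrix.mulVec, dotProduct, Fin.sum_univ_six, Matrix.of_apply,
          Matrix.cons_val_zero, c6_1, c6_2, c6_3, c6_4, c6_5, c5_1, c5_2, c5_3, c5_4, c4_1, c4_2, c4_3, c3_1, c3_2, c2_1] <;>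
        ((try field_simp) <;> (try ring) <;> (try tauto))⟩
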